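/- Third-order divergence identity for the score: Let q: ℝ^d → ℝ be positive and three times continuously differentiable, and set f = log q. Then for every y ∈ ℝ^d: ∇·( Δq(y)·∇f(y) − ∇²f(y)∇q(y) ) = ⟨∇²q(y), ∇f(y) ⊗ ∇f(y)⟩ + 2·⟨∇q(y), ∇f(y)⟩·Δf(y) + q(y)·( (Δf(y))² − ⟨∇²f(y), ∇²f(y)⟩ ), where ∇· denotes the divergence of a vector field, ⟨·,·⟩ between matrices is the Frobenius inner product, and ⟨·,·⟩ between vectors is the Euclidean inner product. -/

import Mathlib

open MeasureTheory Real

noncomputable section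

/-- Partial derivative of `h` in coordinate `i`. -/
def pd {d : ℕ} (i : Fin d) (h : (Fin d → ℝ) → ℝ) (y : Fin d → ℝ) : ℝ :=
  fderiv ℝ h y (Pi.single i 1)

section helperlemmas

variable {d : ℕ}

lemma pd_mul (i : Fin d) {g h : (Fin d → ℝ) → ℝ} {y : Fin d → ℝ}
    (hg : DifferentiableAt ℝ g y) (hh : DifferentiableAt ℝ h y) :
    pd i (fun x => g x * h x) y = pd i g y * h y + g y * pd i h y := by
  unfold pd
  rw [fderiv_fun_mul hg hh]
  simp only [ContinuousLinearMap.add_apply, ContinuousLinearMap.coe_smul', Pi.smul_apply,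
    smul_eq_mul]
  ring

lemma pd_sub (i : Fin d) {g h : (Fin d → ℝ) → ℝ} {y : Fin d → ℝ}
    (hg : DifferentiableAt ℝ g y) (hh : DifferentiableAt ℝ h y) :
    pd i (fun x => g x - h x) y = pd i g y - pd i h y := by
  unfold pd
  rw [fderiv_fun_sub hg hh]
  simp

lemma pd_sum (i : Fin d) {ι : Type*} (s : Finset ι) {F : ι → (Fin d → ℝ) → ℝ} {y : Fin d → ℝ}
    (h : ∀ j ∈ s, DifferentiableAt ℝ (F j) y) :
    pd i (fun x => ∑ j ∈ s, F j x) y = ∑ j ∈ s, pd i (F j) y := by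
  unfold pd
  rw [fderiv_fun_sum h]
  simp

lemma pd_inv (i : Fin d) {h : (Fin d → ℝ) → ℝ} {y : Fin d → ℝ}
    (hh : DifferentiableAt ℝ h y) (h0 : h y ≠ 0) :
    pd i (fun x => (h x)⁻¹) y = -pd i h y / (h y) ^ 2 := by
  unfold pd
  have := ((hasFDerivAt_inv' (𝕜 := ℝ) h0).comp y hh.hasFDerivAt).fderiv
  rw [show (Inv.inv ∘ h) = fun x => (h x)⁻¹ from rfl] at this
  rw [this]
  simp only [ContinuousLinearMap.coe_comp', Function.comp_apply,
    ContinuousLinearMap.neg_apply, ContinuousLinearMap.mulLeftRight_apply]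
  rw [neg_div, neg_inj, pow_two, div_eq_mul_inv, mul_inv]
  ring

lemma pd_div (i : Fin d) {g h : (Fin d → ℝ) → ℝ} {y : Fin d → ℝ}
    (hg : DifferentiableAt ℝ g y) (hh : DifferentiableAt ℝ h y) (h0 : h y ≠ 0) :
    pd i (fun x => g x / h x) y = (pd i g y * h y - g y * pd i h y) / (h y) ^ 2 := by
  have e : (fun x => g x / h x) = fun x => g x * (h x)⁻¹ := by
    funext x; rw [div_eq_mul_inv]
  rw [e, pd_mul i hg (hh.fun_inv h0), pd_inv i hh h0]
  field_simp
  ring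

lemma pd_log (i : Fin d) {g : (Fin d → ℝ) → ℝ} {y : Fin d → ℝ}
    (hg : DifferentiableAt ℝ g y) (h0 : g y ≠ 0) :
    pd i (fun x => Real.log (g x)) y = pd i g y / g y := by
  unfold pd
  rw [(hg.hasFDerivAt.log h0).fderiv]
  simp only [ContinuousLinearMap.coe_smul', Pi.smul_apply, smul_eq_mul]
  rw [div_eq_inv_mul]

lemma contDiff_pd {k : ℕ} {h : (Fin d → ℝ) → ℝ} (hh : ContDiff ℝ (k + 1 : ℕ) h) (i : Fin d) :
    ContDiff ℝ (k : ℕ) (pd i h) := by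
  have h1 : ContDiff ℝ (k : ℕ) (fderiv ℝ h) := hh.fderiv_right (by exact_mod_cast le_rfl)
  exact h1.clm_apply contDiff_const

lemma pd_comm {h : (Fin d → ℝ) → ℝ} (hh : ContDiff ℝ 2 h) (i j : Fin d) (y : Fin d → ℝ) :
    pd i (pd j h) y = pd j (pd i h) y := by
  have hdiff : DifferentiableAt ℝ (fderiv ℝ h) y := by
    have h1 : ContDiff ℝ (1 : ℕ) (fderiv ℝ h) := hh.fderiv_right (by norm_num)
    exact (h1.differentiable (by norm_num)) y
  have key : ∀ v w : Fin d → ℝ,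
      fderiv ℝ (fun x => fderiv ℝ h x w) y v = fderiv ℝ (fderiv ℝ h) y v w := by
    intro v w
    rw [fderiv_clm_apply hdiff (differentiableAt_const w)]
    simp
  have symm : IsSymmSndFDerivAt ℝ h y := (hh.contDiffAt (x := y)).isSymmSndFDerivAt (by simp)
  show fderiv ℝ (pd j h) y (Pi.single i 1) = fderiv ℝ (pd i h) y (Pi.single j 1)
  have e1 : pd j h = fun x => fderiv ℝ h x (Pi.single j 1) := rfl
  have e2 : pd i h = fun x => fderiv ℝ h x (Pi.single i 1) := rfl
  rw [e1, e2, key, key, symm (Pi.single i 1) (Pi.single j 1)]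


lemma sum_algebra (Q : ℝ) (hQ : Q ≠ 0) (a : Fin d → ℝ) (b : Fin d → Fin d → ℝ)
    (c : Fin d → Fin d → Fin d → ℝ) (hc : ∀ i j, c j j i = c i j j) :
    (∑ i, ((∑ j, c i j j) * (a i / Q)
      + (∑ j, b j j) * ((b i i * Q - a i * a i) / Q ^ 2)
      - ∑ j, (((c i i j * Q + b i j * a i - (b i j * a i + a j * b i i)) * Q ^ 2
          - (b i j * Q - a j * a i) * (a i * Q + Q * a i)) / (Q ^ 2) ^ 2 * a j
        + (b i j * Q - a j * a i) / Q ^ 2 * b i j)))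
    = (∑ i, ∑ j, b i j * (a i / Q * (a j / Q)))
      + 2 * (∑ i, a i * (a i / Q)) * (∑ i, (b i i * Q - a i * a i) / Q ^ 2)
      + Q * ((∑ i, (b i i * Q - a i * a i) / Q ^ 2) ^ 2
        - ∑ i, ∑ j, (b i j * Q - a j * a i) / Q ^ 2 * ((b i j * Q - a j * a i) / Q ^ 2)) := by
  have key : ∀ i j : Fin d,
      c i j j * (a i / Q) + b j j * ((b i i * Q - a i * a i) / Q ^ 2)
        - (((c i i j * Q + b i j * a i - (b i j * a i + a j * b i i)) * Q ^ 2
            - (b i j * Q - a j * a i) * (a i * Q + Q * a i)) / (Q ^ 2) ^ 2 * a j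
          + (b i j * Q - a j * a i) / Q ^ 2 * b i j)
      = (b i j * (a i / Q * (a j / Q))
          + 2 * (a i * (a i / Q)) * ((b j j * Q - a j * a j) / Q ^ 2)
          + Q * ((b i i * Q - a i * a i) / Q ^ 2 * ((b j j * Q - a j * a j) / Q ^ 2)
            - (b i j * Q - a j * a i) / Q ^ 2 * ((b i j * Q - a j * a i) / Q ^ 2)))
        + (c i j j * a i / Q - c i i j * a j / Q)
        + (2 * a j ^ 2 * b i i / Q ^ 2 - 2 * a i ^ 2 * b j j / Q ^ 2) := by
    intro i j
    field_simp
    ring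
  -- turn LHS into a double sum
  have hL : ∀ i : Fin d,
      (∑ j, c i j j) * (a i / Q) + (∑ j, b j j) * ((b i i * Q - a i * a i) / Q ^ 2)
        - ∑ j, (((c i i j * Q + b i j * a i - (b i j * a i + a j * b i i)) * Q ^ 2
            - (b i j * Q - a j * a i) * (a i * Q + Q * a i)) / (Q ^ 2) ^ 2 * a j
          + (b i j * Q - a j * a i) / Q ^ 2 * b i j)
      = ∑ j, (c i j j * (a i / Q) + b j j * ((b i i * Q - a i * a i) / Q ^ 2)
          - (((c i i j * Q + b i j * a i - (b i j * a i + a j * b i i)) * Q ^ 2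
              - (b i j * Q - a j * a i) * (a i * Q + Q * a i)) / (Q ^ 2) ^ 2 * a j
            + (b i j * Q - a j * a i) / Q ^ 2 * b i j)) := by
    intro i
    simp only [Finset.sum_sub_distrib, Finset.sum_add_distrib, Finset.sum_mul]
  -- zero sums
  have hz1 : (∑ i, ∑ j, (c i j j * a i / Q - c i i j * a j / Q)) = 0 := by
    have hsw : (∑ i, ∑ j, c i i j * a j / Q) = ∑ i, ∑ j, c i j j * a i / Q := by
      rw [Finset.sum_comm]
      exact Finset.sum_congr rfl fun i _ => Finset.sum_congr rfl fun j _ => by rw [hc i j]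
    simp only [Finset.sum_sub_distrib]
    rw [hsw, sub_self]
  have hz2 : (∑ i, ∑ j, (2 * a j ^ 2 * b i i / Q ^ 2 - 2 * a i ^ 2 * b j j / Q ^ 2)) = 0 := by
    have hsw : (∑ i, ∑ j, 2 * a j ^ 2 * b i i / Q ^ 2)
        = ∑ i, ∑ j, 2 * a i ^ 2 * b j j / Q ^ 2 := Finset.sum_comm
    simp only [Finset.sum_sub_distrib]
    rw [hsw, sub_self]
  -- turn RHS into a double sum
  have hR : (∑ i, ∑ j, b i j * (a i / Q * (a j / Q)))
      + 2 * (∑ i, a i * (a i / Q)) * (∑ i, (b i i * Q - a i * a i) / Q ^ 2)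
      + Q * ((∑ i, (b i i * Q - a i * a i) / Q ^ 2) ^ 2
        - ∑ i, ∑ j, (b i j * Q - a j * a i) / Q ^ 2 * ((b i j * Q - a j * a i) / Q ^ 2))
      = ∑ i, ∑ j, (b i j * (a i / Q * (a j / Q))
          + 2 * (a i * (a i / Q)) * ((b j j * Q - a j * a j) / Q ^ 2)
          + Q * ((b i i * Q - a i * a i) / Q ^ 2 * ((b j j * Q - a j * a j) / Q ^ 2)
            - (b i j * Q - a j * a i) / Q ^ 2 * ((b i j * Q - a j * a i) / Q ^ 2))) := by
    rw [show (2:ℝ) * (∑ i, a i * (a i / Q)) = ∑ i, 2 * (a i * (a i / Q)) from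
      Finset.mul_sum _ _ _]
    rw [Finset.sum_mul_sum Finset.univ Finset.univ (fun i => 2 * (a i * (a i / Q)))
      (fun j => (b j j * Q - a j * a j) / Q ^ 2)]
    rw [pow_two (∑ i, (b i i * Q - a i * a i) / Q ^ 2), Finset.sum_mul_sum Finset.univ Finset.univ
      (fun i => (b i i * Q - a i * a i) / Q ^ 2) (fun j => (b j j * Q - a j * a j) / Q ^ 2)]
    rw [show (∑ i, ∑ j, ((b i i * Q - a i * a i) / Q ^ 2) * ((b j j * Q - a j * a j) / Q ^ 2))
          - (∑ i, ∑ j, (b i j * Q - a j * a i) / Q ^ 2 * ((b i j * Q - a j * a i) / Q ^ 2))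
        = ∑ i, ∑ j, (((b i i * Q - a i * a i) / Q ^ 2) * ((b j j * Q - a j * a j) / Q ^ 2)
            - (b i j * Q - a j * a i) / Q ^ 2 * ((b i j * Q - a j * a i) / Q ^ 2)) by
      rw [← Finset.sum_sub_distrib]
      exact Finset.sum_congr rfl fun i _ => by rw [← Finset.sum_sub_distrib]]
    simp only [Finset.mul_sum]
    rw [← Finset.sum_add_distrib, ← Finset.sum_add_distrib]
    exact Finset.sum_congr rfl fun i _ => by
      rw [← Finset.sum_add_distrib, ← Finset.sum_add_distrib]
  rw [hR]
  calc (∑ i, ((∑ j, c i j j) * (a i / Q)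
      + (∑ j, b j j) * ((b i i * Q - a i * a i) / Q ^ 2)
      - ∑ j, (((c i i j * Q + b i j * a i - (b i j * a i + a j * b i i)) * Q ^ 2
          - (b i j * Q - a j * a i) * (a i * Q + Q * a i)) / (Q ^ 2) ^ 2 * a j
        + (b i j * Q - a j * a i) / Q ^ 2 * b i j)))
      = ∑ i, ∑ j, ((b i j * (a i / Q * (a j / Q))
          + 2 * (a i * (a i / Q)) * ((b j j * Q - a j * a j) / Q ^ 2)
          + Q * ((b i i * Q - a i * a i) / Q ^ 2 * ((b j j * Q - a j * a j) / Q ^ 2)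
            - (b i j * Q - a j * a i) / Q ^ 2 * ((b i j * Q - a j * a i) / Q ^ 2)))
        + (c i j j * a i / Q - c i i j * a j / Q)
        + (2 * a j ^ 2 * b i i / Q ^ 2 - 2 * a i ^ 2 * b j j / Q ^ 2)) := by
        refine Finset.sum_congr rfl fun i _ => ?_
        rw [hL i]
        exact Finset.sum_congr rfl fun j _ => key i j
    _ = (∑ i, ∑ j, (b i j * (a i / Q * (a j / Q))
          + 2 * (a i * (a i / Q)) * ((b j j * Q - a j * a j) / Q ^ 2)
          + Q * ((b i i * Q - a i * a i) / Q ^ 2 * ((b j j * Q - a j * a j) / Q ^ 2)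
            - (b i j * Q - a j * a i) / Q ^ 2 * ((b i j * Q - a j * a i) / Q ^ 2))))
        + (∑ i, ∑ j, (c i j j * a i / Q - c i i j * a j / Q))
        + (∑ i, ∑ j, (2 * a j ^ 2 * b i i / Q ^ 2 - 2 * a i ^ 2 * b j j / Q ^ 2)) := by
        simp_rw [← Finset.sum_add_distrib]
    _ = _ := by rw [hz1, hz2, add_zero, add_zero]

end helperlemmas

/-- Iterated partial derivative along a list of coordinate indices. -/
def pdl {d : ℕ} (l : List (Fin d)) (h : (Fin d → ℝ) → ℝ) : (Fin d → ℝ) → ℝ :=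
  l.foldr (fun i acc => pd i acc) h

/-- Gradient vector. -/
def grad {d : ℕ} (h : (Fin d → ℝ) → ℝ) (y : Fin d → ℝ) : Fin d → ℝ :=
  fun i => pd i h y

/-- Hessian matrix. -/
def hess {d : ℕ} (h : (Fin d → ℝ) → ℝ) (y : Fin d → ℝ) : Matrix (Fin d) (Fin d) ℝ :=
  Matrix.of fun i j => pd i (pd j h) y

/-- Laplacian. -/
def lap {d : ℕ} (h : (Fin d → ℝ) → ℝ) (y : Fin d → ℝ) : ℝ :=
  ∑ i, pd i (pd i h) y

/-- Euclidean norm on `Fin d → ℝ`. -/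
def eunorm {d : ℕ} (v : Fin d → ℝ) : ℝ :=
  Real.sqrt (∑ i, v i ^ 2)

/-- Frobenius norm of a matrix. -/
def fnorm {d : ℕ} (A : Matrix (Fin d) (Fin d) ℝ) : ℝ :=
  Real.sqrt (∑ i, ∑ j, A i j ^ 2)

/-- Sup (ℓ∞) norm on `Fin d → ℝ`. -/
def supnorm {d : ℕ} (v : Fin d → ℝ) : ℝ :=
  ⨆ i, |v i|

/-- Smoothness assumption `S(k)`: `p` is `C^k` and all of its iterated partial
derivatives of order at most `k` are uniformly bounded. -/
def SmoothS {d : ℕ} (k : ℕ) (p : (Fin d → ℝ) → ℝ) : Prop :=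
  ContDiff ℝ k p ∧
    ∀ l : List (Fin d), l.length ≤ k → ∃ M : ℝ, ∀ x, |pdl l p x| ≤ M

/-- The class `M²(ℝ^d)` of 2-smooth test functions. -/
def TestM2 {d : ℕ} (m : (Fin d → ℝ) → ℝ) : Prop :=
  ContDiff ℝ 2 m ∧ (∃ M : ℝ, ∀ y i j, |pd i (pd j m) y| ≤ M) ∧
    Integrable m ∧ Integrable (fun y => supnorm (grad m y))

/-- The class `M³(ℝ^d)` of 3-smooth test functions. -/
def TestM3 {d : ℕ} (m : (Fin d → ℝ) → ℝ) : Prop :=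
  ContDiff ℝ 3 m ∧ (∃ M : ℝ, ∀ y i j k, |pd i (pd j (pd k m)) y| ≤ M) ∧
    Integrable m ∧ Integrable (fun y => supnorm (grad m y))

/-- Third-order divergence identity for the score: for `f = log q`,
`∇·(Δq ∇f - ∇²f ∇q) = ⟨∇²q, ∇f ⊗ ∇f⟩ + 2 ⟨∇q, ∇f⟩ Δf + q ((Δf)² - ⟨∇²f, ∇²f⟩)`. -/
theorem third_order_divergence_identity
    {d : ℕ} (hd : 0 < d) (q : (Fin d → ℝ) → ℝ)
    (hqpos : ∀ y, 0 < q y) (hq : ContDiff ℝ 3 q)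
    (f : (Fin d → ℝ) → ℝ) (hf : f = fun x => Real.log (q x)) (y : Fin d → ℝ) :
    (∑ i, pd i (fun x => lap q x * grad f x i - (hess f x).mulVec (grad q x) i) y) =
      (∑ i, ∑ j, hess q y i j * (grad f y i * grad f y j)) +
        2 * (∑ i, grad q y i * grad f y i) * lap f y +
        q y * ((lap f y) ^ 2 - ∑ i, ∑ j, hess f y i j * hess f y i j) := by
  have hQ : ∀ x, q x ≠ 0 := fun x => (hqpos x).ne'
  have hq3 : ContDiff ℝ ((2 : ℕ) + 1 : ℕ) q := by exact_mod_cast hq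
  have hq2 : ContDiff ℝ 2 q := hq.of_le (by norm_num)
  have hdq : Differentiable ℝ q := hq.differentiable (by norm_num)
  have hpdq : ∀ j, ContDiff ℝ (2 : ℕ) (pd j q) := fun j => contDiff_pd hq3 j
  have hpdq1 : ∀ i j, ContDiff ℝ (1 : ℕ) (pd i (pd j q)) := fun i j =>
    contDiff_pd (by exact_mod_cast hpdq j) i
  have hdpdq : ∀ j, Differentiable ℝ (pd j q) := fun j =>
    (hpdq j).differentiable (by simp)
  have hdpdq2 : ∀ i j, Differentiable ℝ (pd i (pd j q)) := fun i j =>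
    (hpdq1 i j).differentiable (by simp)
  -- smoothness of f
  have hf3 : ContDiff ℝ 3 f := by rw [hf]; exact hq.log hQ
  have hf3' : ContDiff ℝ ((2 : ℕ) + 1 : ℕ) f := by exact_mod_cast hf3
  have hdf : ∀ j, Differentiable ℝ (pd j f) := fun j =>
    (contDiff_pd hf3' j).differentiable (by simp)
  have hdpdf2 : ∀ i j, Differentiable ℝ (pd i (pd j f)) := fun i j =>
    (contDiff_pd (k := 1) (by exact_mod_cast contDiff_pd hf3' j) i).differentiable
      (by simp)
  -- first derivative of f
  have h1 : ∀ j, pd j f = fun x => pd j q x / q x := by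
    intro j; funext x
    rw [hf]
    exact pd_log j (hdq x) (hQ x)
  -- second derivative of f
  have h2 : ∀ i j, pd i (pd j f) = fun x => (pd i (pd j q) x * q x - pd j q x * pd i q x) / q x ^ 2 := by
    intro i j; funext x
    rw [h1 j]
    exact pd_div i (hdpdq j x) (hdq x) (hQ x)
  have h2v : ∀ i j, pd i (pd j f) y
      = (pd i (pd j q) y * q y - pd j q y * pd i q y) / q y ^ 2 := fun i j => by rw [h2 i j]
  have h1v : ∀ j, pd j f y = pd j q y / q y := fun j => by rw [h1 j]
  -- third derivative of f at y
  have h3 : ∀ i j, pd i (pd i (pd j f)) y =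
      ((pd i (pd i (pd j q)) y * q y + pd i (pd j q) y * pd i q y
        - (pd i (pd j q) y * pd i q y + pd j q y * pd i (pd i q) y)) * q y ^ 2
        - (pd i (pd j q) y * q y - pd j q y * pd i q y) * (pd i q y * q y + q y * pd i q y))
        / (q y ^ 2) ^ 2 := by
    intro i j
    rw [h2 i j]
    have hnum : DifferentiableAt ℝ (fun x => pd i (pd j q) x * q x - pd j q x * pd i q x) y :=
      ((hdpdq2 i j y).mul (hdq y)).sub ((hdpdq j y).mul (hdpdq i y))
    have hden : DifferentiableAt ℝ (fun x => q x ^ 2) y := (hdq y).pow 2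
    rw [pd_div i hnum hden (pow_ne_zero 2 (hQ y))]
    rw [pd_sub i ((hdpdq2 i j y).fun_mul (hdq y)) ((hdpdq j y).fun_mul (hdpdq i y))]
    rw [pd_mul i (hdpdq2 i j y) (hdq y), pd_mul i (hdpdq j y) (hdpdq i y)]
    have e4 : pd i (fun x => q x ^ 2) y = pd i q y * q y + q y * pd i q y := by
      have e : (fun x => q x ^ 2) = fun x => q x * q x := by funext x; ring
      rw [e]
      exact pd_mul i (hdq y) (hdq y)
    rw [e4]
  -- rewrite the divergence integrand
  have hfun : ∀ i : Fin d, (fun x => lap q x * grad f x i - (hess f x).mulVec (grad q x) i)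
      = fun x => lap q x * pd i f x - ∑ j, pd i (pd j f) x * pd j q x := by
    intro i; funext x
    simp [grad, hess, Matrix.mulVec, dotProduct]
  -- compute each divergence term
  have hL : ∀ i : Fin d, pd i (fun x => lap q x * pd i f x - ∑ j, pd i (pd j f) x * pd j q x) y
      = (∑ j, pd i (pd j (pd j q)) y) * (pd i q y / q y)
        + (∑ j, pd j (pd j q) y)
          * ((pd i (pd i q) y * q y - pd i q y * pd i q y) / q y ^ 2)
        - ∑ j, (((pd i (pd i (pd j q)) y * q y + pd i (pd j q) y * pd i q y
              - (pd i (pd j q) y * pd i q y + pd j q y * pd i (pd i q) y)) * q y ^ 2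
              - (pd i (pd j q) y * q y - pd j q y * pd i q y)
                * (pd i q y * q y + q y * pd i q y)) / (q y ^ 2) ^ 2 * pd j q y
            + (pd i (pd j q) y * q y - pd j q y * pd i q y) / q y ^ 2 * pd i (pd j q) y) := by
    intro i
    have hlapfn : lap q = fun x => ∑ j, pd j (pd j q) x := rfl
    have dlap : DifferentiableAt ℝ (lap q) y := by
      rw [hlapfn]
      exact DifferentiableAt.fun_sum (fun j _ => hdpdq2 j j y)
    have dprod : ∀ j : Fin d, DifferentiableAt ℝ (fun x => pd i (pd j f) x * pd j q x) y :=
      fun j => (hdpdf2 i j y).mul (hdpdq j y)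
    rw [pd_sub i (dlap.fun_mul (hdf i y)) (DifferentiableAt.fun_sum fun j _ => dprod j)]
    rw [pd_mul i dlap (hdf i y)]
    rw [pd_sum i Finset.univ (fun j _ => dprod j)]
    have hlapq : pd i (lap q) y = ∑ j, pd i (pd j (pd j q)) y := by
      rw [hlapfn, pd_sum i Finset.univ (fun j _ => hdpdq2 j j y)]
    have hlapqy : lap q y = ∑ j, pd j (pd j q) y := rfl
    rw [hlapq, hlapqy, h1v i, h2v i i]
    congr 1
    refine Finset.sum_congr rfl fun j _ => ?_
    rw [pd_mul i (hdpdf2 i j y) (hdpdq j y), h3 i j, h2v i j]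
  -- symmetry of third derivatives
  have hcsym : ∀ i j, pd j (pd j (pd i q)) y = pd i (pd j (pd j q)) y := by
    intro i j
    have e : pd j (pd i q) = pd i (pd j q) := funext fun x => pd_comm hq2 j i x
    rw [e]
    exact (pd_comm (by exact_mod_cast hpdq j) i j y).symm
  -- put everything together
  simp only [hfun, hL]
  simp only [grad, hess, lap, Matrix.of_apply, h2v, h1v]
  exact sum_algebra (q y) (hQ y) (fun i => pd i q y) (fun i j => pd i (pd j q) y)
    (fun i j k => pd i (pd j (pd k q)) y) hcsym
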